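/- arXiv:2105.07424 — 2 statements merged into one kernel-verified Lean document; each statement's English description precedes it below -/
import Mathlib

section
/- Let B and A be m×l and l×n real matrices, p = max{m,n,l}, q = min{m,n,l}. Then for each k = 1,…,q, the k-th largest singular value of the product satisfies σ_k(BA) ≤ min_{1 ≤ i ≤ k} σ_i(B) σ_{k+1−i}(A). -/
open Matrix

/-- the k-th largest element of a finite tuple (k is 1-based) -/
noncomputable def kthLargest {n : ℕ} (f : Fin n → ℝ) (k : Fin n) : ℝ :=
  (f ∘ Tuple.sort f) (Fin.rev k)

/-- the k-th largest singular value of a real matrix (1-based indexing;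
returns 0 for out-of-range k), defined via the eigenvalues of `Mᴴ * M`. -/
noncomputable def singVal {m n : ℕ} (M : Matrix (Fin m) (Fin n) ℝ) (k : ℕ) : ℝ :=
  if h : k - 1 < n then
    Real.sqrt (kthLargest (show (Mᵀ * M).IsHermitian by
      have h := Matrix.isHermitian_conjTranspose_mul_self M
      rwa [Matrix.conjTranspose_eq_transpose_of_trivial] at h).eigenvalues ⟨k - 1, h⟩)
  else 0

lemma gram_decomp {a b : ℕ} (M : Matrix (Fin a) (Fin b) ℝ) :
    ∃ (w : Fin b → (Fin b → ℝ)) (g : Fin b → ℝ),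
      (∀ j j', dotProduct (w j) (w j') = if j = j' then 1 else 0) ∧
      Monotone g ∧ (∀ j, 0 ≤ g j) ∧
      (∀ x : Fin b → ℝ, dotProduct (M *ᵥ x) (M *ᵥ x) = ∑ j, g j * (dotProduct (w j) x)^2) ∧
      (∀ x : Fin b → ℝ, ∑ j, (dotProduct (w j) x)^2 = dotProduct x x) ∧
      (∀ t : ℕ, ∀ _ht : 1 ≤ t, ∀ _h : t - 1 < b, singVal M t = Real.sqrt (g ⟨b - t, by omega⟩)) := by
  classical
  set hM := Matrix.isHermitian_conjTranspose_mul_self M with hhM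
  set σ : Equiv.Perm (Fin b) := Tuple.sort hM.eigenvalues with hσ
  have hin : ∀ u v : EuclideanSpace ℝ (Fin b), (inner ℝ u v : ℝ) = dotProduct (⇑u) (⇑v) := by
    intro u v
    rw [EuclideanSpace.inner_eq_star_dotProduct, star_trivial, dotProduct_comm]
  -- Parseval for the unpermuted basis, in dotProduct form
  have key : ∀ x y : Fin b → ℝ,
      (∑ i, (dotProduct (⇑(hM.eigenvectorBasis i)) x) * (dotProduct (⇑(hM.eigenvectorBasis i)) y))
        = dotProduct x y := by
    intro x y
    have h3 := hM.eigenvectorBasis.sum_inner_mul_inner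
      ((WithLp.equiv 2 _).symm x) ((WithLp.equiv 2 _).symm y)
    simp only [hin, WithLp.equiv_symm_apply, WithLp.ofLp_toLp] at h3
    rw [← h3]
    refine Finset.sum_congr rfl fun i _ => ?_
    rw [dotProduct_comm (⇑(hM.eigenvectorBasis i))]
  have hsym : (Mᴴ * M)ᵀ = Mᴴ * M := by
    rw [← Matrix.conjTranspose_eq_transpose_of_trivial]
    exact hM
  have heig : ∀ i (x : Fin b → ℝ),
      dotProduct (⇑(hM.eigenvectorBasis i)) ((Mᴴ * M) *ᵥ x)
        = hM.eigenvalues i * dotProduct (⇑(hM.eigenvectorBasis i)) x := by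
    intro i x
    rw [Matrix.dotProduct_mulVec, ← Matrix.mulVec_transpose, hsym,
      hM.mulVec_eigenvectorBasis, smul_dotProduct]
    rfl
  have h1 : ∀ x : Fin b → ℝ,
      dotProduct (M *ᵥ x) (M *ᵥ x) = dotProduct x ((Mᴴ * M) *ᵥ x) := by
    intro x
    rw [← Matrix.mulVec_mulVec, Matrix.conjTranspose_eq_transpose_of_trivial,
      Matrix.mulVec_transpose]
    conv_rhs => rw [dotProduct_comm, ← Matrix.dotProduct_mulVec]
  have keysq : ∀ x : Fin b → ℝ,
      (∑ i, (dotProduct (⇑(hM.eigenvectorBasis i)) x)^2) = dotProduct x x := by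
    intro x
    rw [← key x x]
    exact Finset.sum_congr rfl fun i _ => sq _
  refine ⟨fun j => ⇑(hM.eigenvectorBasis (σ j)), hM.eigenvalues ∘ σ, ?_, ?_, ?_, ?_, ?_, ?_⟩
  · intro j j'
    have h := orthonormal_iff_ite.mp hM.eigenvectorBasis.orthonormal (σ j) (σ j')
    rw [hin] at h
    rw [h]
    simp [EmbeddingLike.apply_eq_iff_eq]
  · exact Tuple.monotone_sort hM.eigenvalues
  · intro j
    exact (Matrix.posSemidef_conjTranspose_mul_self M).eigenvalues_nonneg (σ j)
  · intro x
    have hx : dotProduct x ((Mᴴ * M) *ᵥ x)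
        = ∑ i, hM.eigenvalues i * (dotProduct (⇑(hM.eigenvectorBasis i)) x)^2 := by
      rw [← key x ((Mᴴ * M) *ᵥ x)]
      refine Finset.sum_congr rfl fun i _ => ?_
      rw [heig]
      ring
    rw [h1, hx]
    exact (Equiv.sum_comp σ (fun i => hM.eigenvalues i * (dotProduct (⇑(hM.eigenvectorBasis i)) x)^2)).symm
  · intro x
    rw [← keysq x]
    exact Equiv.sum_comp σ (fun i => (dotProduct (⇑(hM.eigenvectorBasis i)) x)^2)
  · intro t ht h
    rw [singVal, dif_pos h]
    congr 1
    show (hM.eigenvalues ∘ Tuple.sort hM.eigenvalues) (Fin.rev ⟨t-1, h⟩) = _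
    have : Fin.rev ⟨t-1, h⟩ = (⟨b - t, by omega⟩ : Fin b) := by
      ext
      simp only [Fin.val_rev]
      omega
    rw [this]

lemma dotProduct_finsum {ι : Type*} [Fintype ι] {b : ℕ} (u : Fin b → ℝ) (f : ι → Fin b → ℝ) :
    dotProduct u (∑ s, f s) = ∑ s, dotProduct u (f s) := by
  simp only [dotProduct, Finset.sum_apply, Finset.mul_sum]
  exact Finset.sum_comm

lemma mulVec_finsum {ι : Type*} [Fintype ι] {a b : ℕ} (M : Matrix (Fin a) (Fin b) ℝ)
    (f : ι → Fin b → ℝ) : M *ᵥ (∑ s, f s) = ∑ s, M *ᵥ f s := by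
  have h := map_sum (Matrix.mulVecLin M) f Finset.univ
  rw [Matrix.mulVecLin_apply] at h
  rw [h]
  exact Finset.sum_congr rfl fun s _ => (Matrix.mulVecLin_apply M (f s)).symm

lemma exists_ne_zero_mulVec_eq_zero {r c : ℕ} (hrc : r < c) (C : Matrix (Fin r) (Fin c) ℝ) :
    ∃ v : Fin c → ℝ, v ≠ 0 ∧ C *ᵥ v = 0 := by
  have hni : ¬ Function.Injective (Matrix.mulVecLin C) := by
    intro hinj
    have := LinearMap.finrank_le_finrank_of_injective hinj
    rw [Module.finrank_fin_fun, Module.finrank_fin_fun] at this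
    omega
  rw [Function.not_injective_iff] at hni
  obtain ⟨x, y, hxy, hne⟩ := hni
  refine ⟨x - y, sub_ne_zero_of_ne hne, ?_⟩
  have : Matrix.mulVecLin C (x - y) = 0 := by rw [map_sub, hxy, sub_self]
  simpa [Matrix.mulVecLin_apply] using this

theorem stmt11 {m l n : ℕ} (B : Matrix (Fin m) (Fin l) ℝ) (A : Matrix (Fin l) (Fin n) ℝ)
    (q : ℕ) (hq : q = min m (min n l)) :
    ∀ k, 1 ≤ k → k ≤ q → ∀ i, 1 ≤ i → i ≤ k →
      singVal (B * A) k ≤ singVal B i * singVal A (k + 1 - i) := by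
  intro k hk1 hkq i hi1 hik
  have hkm : k ≤ m := by omega
  have hkn : k ≤ n := by omega
  have hkl : k ≤ l := by omega
  obtain ⟨wB, gB, hBo, hBm, hBnn, hBid, hBpar, hBsv⟩ := gram_decomp B
  obtain ⟨wA, gA, hAo, hAm, hAnn, hAid, hApar, hAsv⟩ := gram_decomp A
  obtain ⟨wP, gP, hPo, hPm, hPnn, hPid, hPpar, hPsv⟩ := gram_decomp (B * A)
  classical
  -- the embedding of the top-k coefficient indices
  set e : Fin k → Fin n := fun s => ⟨n - k + s.val, by omega⟩ with he
  -- the constraint matrix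
  set C : Matrix (Fin (k-1)) (Fin k) ℝ := fun r s =>
    if hr : r.val < i - 1 then
      dotProduct (wB ⟨l - 1 - r.val, by omega⟩) (A *ᵥ (wP (e s)))
    else
      dotProduct (wA ⟨n - 1 - (r.val - (i-1)), by omega⟩) (wP (e s)) with hC
  obtain ⟨c, hc0, hcC⟩ := exists_ne_zero_mulVec_eq_zero (by omega) C
  set v : Fin n → ℝ := ∑ s, c s • wP (e s) with hv
  set c' : Fin n → ℝ := fun j => if h : n - k ≤ j.val then c ⟨j.val - (n-k), by omega⟩ else 0
    with hc'
  have einj : ∀ (s : Fin k) (j : Fin n), j = e s ↔ (n - k ≤ j.val ∧ s = ⟨j.val - (n-k), by omega⟩) := by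
    intro s j
    constructor
    · rintro rfl; exact ⟨by simp [he], by ext; simp [he]⟩
    · rintro ⟨h1, rfl⟩; ext; simp [he]; omega
  have F1 : ∀ j : Fin n, dotProduct (wP j) v = c' j := by
    intro j
    rw [hv, dotProduct_finsum]
    by_cases h : n - k ≤ j.val
    · have : ∀ s : Fin k, dotProduct (wP j) (c s • wP (e s))
          = if s = ⟨j.val - (n-k), by omega⟩ then c s else 0 := by
        intro s
        rw [dotProduct_smul, hPo, smul_eq_mul]
        by_cases hs : s = (⟨j.val - (n-k), by omega⟩ : Fin k)
        · rw [if_pos ((einj s j).mpr ⟨h, hs⟩), if_pos hs, mul_one]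
        · rw [if_neg (fun hj => hs ((einj s j).mp hj).2), if_neg hs, mul_zero]
      rw [Finset.sum_congr rfl (fun s _ => this s), Finset.sum_ite_eq' Finset.univ _ c,
        if_pos (Finset.mem_univ _)]
      simp only [hc']
      rw [dif_pos h]
    · simp only [hc']
      rw [dif_neg h]
      refine Finset.sum_eq_zero fun s _ => ?_
      rw [dotProduct_smul, hPo, smul_eq_mul,
        if_neg (fun hj => h ((einj s j).mp hj).1), mul_zero]
  have F2eq : dotProduct v v = ∑ j, (c' j)^2 := by
    rw [← hPpar v]
    exact Finset.sum_congr rfl fun j _ => by rw [F1]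
  have F2 : 0 < dotProduct v v := by
    rw [F2eq]
    have : ∃ s, c s ≠ 0 := by
      by_contra hcon
      push_neg at hcon
      exact hc0 (funext fun s => hcon s)
    obtain ⟨s, hs⟩ := this
    have hcs : c' (e s) ≠ 0 := by
      simp only [hc']
      have h1 : n - k ≤ (e s).val := by simp [he]
      rw [dif_pos h1]
      have : (⟨(e s).val - (n-k), by omega⟩ : Fin k) = s := by ext; simp [he]
      rw [this]; exact hs
    refine Finset.sum_pos' (fun j _ => sq_nonneg _) ⟨e s, Finset.mem_univ _, ?_⟩
    positivity
  have hrow : ∀ r : Fin (k-1), ∑ s, C r s * c s = 0 := by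
    intro r
    have := congrFun hcC r
    simpa [Matrix.mulVec, dotProduct] using this
  have F4 : ∀ j : Fin l, l - i < j.val → dotProduct (wB j) (A *ᵥ v) = 0 := by
    intro j hj
    set r : Fin (k-1) := ⟨l - 1 - j.val, by omega⟩ with hr
    have hrv : (r : ℕ) = l - 1 - j.val := rfl
    have hA_v : A *ᵥ v = ∑ s, c s • (A *ᵥ wP (e s)) := by
      rw [hv, mulVec_finsum]
      exact Finset.sum_congr rfl fun s _ => Matrix.mulVec_smul A (c s) (wP (e s))
    rw [hA_v, dotProduct_finsum]
    have hterm : ∀ s, dotProduct (wB j) (c s • (A *ᵥ wP (e s))) = C r s * c s := by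
      intro s
      rw [dotProduct_smul, smul_eq_mul, hC]
      simp only []
      rw [dif_pos (show (r:ℕ) < i - 1 by omega)]
      have hjj : (⟨l - 1 - (r:ℕ), by omega⟩ : Fin l) = j := by ext; simp [hrv]; omega
      rw [hjj, mul_comm]
    rw [Finset.sum_congr rfl (fun s _ => hterm s)]
    exact hrow r
  have F3 : ∀ j : Fin n, n - (k + 1 - i) < j.val → dotProduct (wA j) v = 0 := by
    intro j hj
    set r : Fin (k-1) := ⟨(i-1) + (n - 1 - j.val), by omega⟩ with hr
    have hrv : (r : ℕ) = (i-1) + (n - 1 - j.val) := rfl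
    rw [hv, dotProduct_finsum]
    have hterm : ∀ s, dotProduct (wA j) (c s • wP (e s)) = C r s * c s := by
      intro s
      rw [dotProduct_smul, smul_eq_mul, hC]
      simp only []
      rw [dif_neg (show ¬((r:ℕ) < i - 1) by omega)]
      have hjj : (⟨n - 1 - ((r:ℕ) - (i-1)), by omega⟩ : Fin n) = j := by ext; simp [hrv]; omega
      rw [hjj, mul_comm]
    rw [Finset.sum_congr rfl (fun s _ => hterm s)]
    exact hrow r
  have step1 : gP ⟨n-k, by omega⟩ * dotProduct v v
      ≤ dotProduct ((B*A) *ᵥ v) ((B*A) *ᵥ v) := by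
    calc gP ⟨n-k, by omega⟩ * dotProduct v v = ∑ j, gP ⟨n-k, by omega⟩ * (c' j)^2 := by
          rw [F2eq, Finset.mul_sum]
      _ ≤ ∑ j, gP j * (dotProduct (wP j) v)^2 := by
          refine Finset.sum_le_sum fun j _ => ?_
          rw [F1 j]
          by_cases h : n - k ≤ j.val
          · exact mul_le_mul_of_nonneg_right (hPm (show (⟨n-k, by omega⟩ : Fin n) ≤ j by rw [Fin.le_def]; exact h))
              (sq_nonneg _)
          · have hz : c' j = 0 := by simp only [hc']; rw [dif_neg h]
            rw [hz]
            simp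
      _ = dotProduct ((B*A) *ᵥ v) ((B*A) *ᵥ v) := (hPid v).symm
  have step2 : dotProduct ((B*A) *ᵥ v) ((B*A) *ᵥ v)
      ≤ gB ⟨l-i, by omega⟩ * dotProduct (A *ᵥ v) (A *ᵥ v) := by
    have hBAv : (B*A) *ᵥ v = B *ᵥ (A *ᵥ v) := (Matrix.mulVec_mulVec _ _ _).symm
    rw [hBAv, hBid (A *ᵥ v), ← hBpar (A *ᵥ v), Finset.mul_sum]
    refine Finset.sum_le_sum fun j _ => ?_
    by_cases h : l - i < j.val
    · rw [F4 j h]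
      simp
    · exact mul_le_mul_of_nonneg_right (hBm (show j ≤ (⟨l-i, by omega⟩ : Fin l) by rw [Fin.le_def]; simp; omega))
        (sq_nonneg _)
  have step3 : dotProduct (A *ᵥ v) (A *ᵥ v)
      ≤ gA ⟨n-(k+1-i), by omega⟩ * dotProduct v v := by
    rw [hAid v, ← hApar v, Finset.mul_sum]
    refine Finset.sum_le_sum fun j _ => ?_
    by_cases h : n - (k+1-i) < j.val
    · rw [F3 j h]
      simp
    · exact mul_le_mul_of_nonneg_right (hAm (show j ≤ (⟨n-(k+1-i), by omega⟩ : Fin n) by rw [Fin.le_def]; simp; omega))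
        (sq_nonneg _)
  have hfin : gP ⟨n-k, by omega⟩ ≤ gB ⟨l-i, by omega⟩ * gA ⟨n-(k+1-i), by omega⟩ := by
    have h2 : gP ⟨n-k, by omega⟩ * dotProduct v v
        ≤ gB ⟨l-i, by omega⟩ * (gA ⟨n-(k+1-i), by omega⟩ * dotProduct v v) :=
      step1.trans (step2.trans (mul_le_mul_of_nonneg_left step3 (hBnn _)))
    rw [← mul_assoc] at h2
    exact le_of_mul_le_mul_right h2 F2
  rw [hPsv k hk1 (by omega), hBsv i hi1 (by omega), hAsv (k+1-i) (by omega) (by omega),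
    ← Real.sqrt_mul (hBnn _)]
  exact Real.sqrt_le_sqrt hfin
end

section
/- Let m(θ) = Aθ + b with A ∈ ℝ^{q×K} and suppose there is a restricted lower bound: for a sparsity level s and cone constant u ≥ 0, min over index sets |I| ≤ s and θ ∈ C_I(u) with |θ|_a = 1 of |Aθ|_∞ ≥ κ, where C_I(u) = {θ : |θ_{I^c}|₁ ≤ u|θ_I|₁} and a ∈ {1,2}. Let Â be a perturbation with |Â − A|_max ≤ b_n. Then for all θ ∈ C_I(u) with |θ|_a = 1 and |I| ≤ s: |Âθ|_∞ ≥ κ − b_n · ((1+u) s^{1−1/a}), using |θ|₁/|θ|_a ≤ (1+u) s^{1−1/a} for θ in the cone (equal to 1 when a=1 and at most (1+u)√s when a=2). -/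
open Matrix BigOperators

theorem stmt19 {q K : ℕ} (A Ahat : Matrix (Fin q) (Fin K) ℝ)
    (b : Fin q → ℝ) (mmap : (Fin K → ℝ) → (Fin q → ℝ)) (hm : ∀ θ, mmap θ = A *ᵥ θ + b)
    (s : ℕ) (u : ℝ) (hu : 0 ≤ u) (a : ℕ) (ha : a = 1 ∨ a = 2)
    (κ bn : ℝ) (hbn : 0 ≤ bn)
    -- restricted lower bound on the cone for the true matrix A
    (hκ : ∀ (I : Finset (Fin K)) (θ : Fin K → ℝ), I.card ≤ s →
      (∑ j ∈ Iᶜ, |θ j|) ≤ u * (∑ j ∈ I, |θ j|) →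
      (∑ j, |θ j| ^ (a : ℝ)) ^ (1 / (a : ℝ)) = 1 →
      κ ≤ ⨆ i, |(A *ᵥ θ) i|)
    -- entrywise perturbation bound
    (hpert : ∀ i j, |Ahat i j - A i j| ≤ bn) :
    ∀ (I : Finset (Fin K)) (θ : Fin K → ℝ), I.card ≤ s →
      (∑ j ∈ Iᶜ, |θ j|) ≤ u * (∑ j ∈ I, |θ j|) →
      (∑ j, |θ j| ^ (a : ℝ)) ^ (1 / (a : ℝ)) = 1 →
      κ - bn * ((1 + u) * (s : ℝ) ^ (1 - 1 / (a : ℝ))) ≤ ⨆ i, |(Ahat *ᵥ θ) i| := by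
  intro I θ hI hcone hnorm
  have hC : (0:ℝ) ≤ (1 + u) * (s : ℝ) ^ (1 - 1 / (a : ℝ)) := by positivity
  -- bound on ℓ1 norm on the cone
  have hsplit : ∑ j, |θ j| = (∑ j ∈ I, |θ j|) + ∑ j ∈ Iᶜ, |θ j| := by
    rw [← Finset.sum_add_sum_compl I]
  have hIsum0 : (0:ℝ) ≤ ∑ j ∈ I, |θ j| := Finset.sum_nonneg fun j _ => abs_nonneg _
  have hl1 : ∑ j, |θ j| ≤ (1 + u) * ∑ j ∈ I, |θ j| := by
    rw [hsplit]; nlinarith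
  have hl1' : ∑ j, |θ j| ≤ (1 + u) * (s : ℝ) ^ (1 - 1 / (a : ℝ)) := by
    rcases ha with ha | ha
    · subst ha
      simp only [Nat.cast_one, div_one, sub_self, Real.rpow_zero, mul_one]
      have : (∑ j, |θ j| ^ ((1:ℕ) : ℝ)) ^ (1 / ((1:ℕ) : ℝ)) = ∑ j, |θ j| := by
        simp
      rw [this] at hnorm
      nlinarith
    · subst ha
      have hpow : ∀ x:ℝ, 0 ≤ x → x ^ (((2:ℕ)):ℝ) = x ^ 2 := fun x hx => by
        rw [Real.rpow_natCast]
      have hsumeq : (∑ j, |θ j| ^ (((2:ℕ)):ℝ)) = ∑ j, |θ j| ^ 2 :=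
        Finset.sum_congr rfl fun j _ => hpow _ (abs_nonneg _)
      have hnorm' : Real.sqrt (∑ j, |θ j| ^ 2) = 1 := by
        rw [Real.sqrt_eq_rpow, ← hsumeq]
        convert hnorm using 3
        norm_num
      have hsum1 : ∑ j, |θ j| ^ 2 = 1 := by
        have h0 : (0:ℝ) ≤ ∑ j, |θ j| ^ 2 := Finset.sum_nonneg fun j _ => sq_nonneg _
        nlinarith [Real.sq_sqrt h0]
      have hIsq : (∑ j ∈ I, |θ j|) ^ 2 ≤ (s:ℝ) := by
        have hcs : (∑ j ∈ I, |θ j|) ^ 2 ≤ (I.card : ℝ) * ∑ j ∈ I, |θ j| ^ 2 := by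
          exact_mod_cast sq_sum_le_card_mul_sum_sq (s := I) (f := fun j => |θ j|)
        have hsub : ∑ j ∈ I, |θ j| ^ 2 ≤ ∑ j, |θ j| ^ 2 :=
          Finset.sum_le_univ_sum_of_nonneg fun j => sq_nonneg _
        have hcard : (I.card : ℝ) ≤ (s:ℝ) := by exact_mod_cast hI
        have h0 : (0:ℝ) ≤ ∑ j ∈ I, |θ j| ^ 2 := Finset.sum_nonneg fun j _ => sq_nonneg _
        nlinarith
      have hIle : ∑ j ∈ I, |θ j| ≤ Real.sqrt s := by
        nlinarith [Real.sqrt_nonneg (s:ℝ), Real.sq_sqrt (Nat.cast_nonneg s : (0:ℝ) ≤ (s:ℝ))]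
      have hexp : (1 - 1/(((2:ℕ)):ℝ)) = 1/2 := by norm_num
      rw [hexp, ← Real.sqrt_eq_rpow]
      have := mul_le_mul_of_nonneg_left hIle (by linarith : (0:ℝ) ≤ 1 + u)
      linarith
  -- pointwise perturbation bound
  have hpt : ∀ i, |(A *ᵥ θ) i| ≤ |(Ahat *ᵥ θ) i| + bn * ∑ j, |θ j| := by
    intro i
    have hdiff : |(A *ᵥ θ) i - (Ahat *ᵥ θ) i| ≤ bn * ∑ j, |θ j| := by
      have : (A *ᵥ θ) i - (Ahat *ᵥ θ) i = ∑ j, (A i j - Ahat i j) * θ j := by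
        simp [Matrix.mulVec, dotProduct, Finset.sum_sub_distrib, sub_mul]
      rw [this, Finset.mul_sum]
      refine (Finset.abs_sum_le_sum_abs _ _).trans (Finset.sum_le_sum fun j _ => ?_)
      rw [abs_mul]
      have h1 : |A i j - Ahat i j| ≤ bn := by rw [abs_sub_comm]; exact hpert i j
      exact mul_le_mul_of_nonneg_right h1 (abs_nonneg _)
    calc |(A *ᵥ θ) i| ≤ |(Ahat *ᵥ θ) i| + |(A *ᵥ θ) i - (Ahat *ᵥ θ) i| := by
          have := abs_sub_abs_le_abs_sub ((A *ᵥ θ) i) ((Ahat *ᵥ θ) i); linarith [abs_nonneg ((A *ᵥ θ) i - (Ahat *ᵥ θ) i)]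
      _ ≤ |(Ahat *ᵥ θ) i| + bn * ∑ j, |θ j| := by linarith
  have hκ' := hκ I θ hI hcone hnorm
  rcases Nat.eq_zero_or_pos q with hq | hq
  · subst hq
    have he : IsEmpty (Fin 0) := by infer_instance
    rw [Real.iSup_of_isEmpty] at hκ' ⊢
    nlinarith
  · have : Nonempty (Fin q) := ⟨⟨0, hq⟩⟩
    have hbdd : BddAbove (Set.range fun i => |(Ahat *ᵥ θ) i|) := Set.Finite.bddAbove (Set.finite_range _)
    have hle : (⨆ i, |(A *ᵥ θ) i|) ≤ (⨆ i, |(Ahat *ᵥ θ) i|) + bn * ∑ j, |θ j| := by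
      refine ciSup_le fun i => (hpt i).trans ?_
      have := le_ciSup hbdd i
      linarith
    have hmul : bn * ∑ j, |θ j| ≤ bn * ((1 + u) * (s : ℝ) ^ (1 - 1 / (a : ℝ))) :=
      mul_le_mul_of_nonneg_left hl1' hbn
    linarith
end
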